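/- arXiv:1506.06692 — 2 statements merged into one kernel-verified Lean document; each statement's English description precedes it below -/
import Mathlib

section
/- Let K = [[A,B],[C,D]] be a real symmetric (p+q)×(p+q) block matrix with C = Bᵀ, let E ∈ ℝ and ε, γ > 0 with γ ≤ ε/4, and assume D − E·I is invertible with ‖(D−E·I)⁻¹‖ ≤ 1/ε, ‖B‖ ≤ γ, ‖C‖ ≤ γ. Let λ₁ ≤ … ≤ λ_m be the eigenvalues of K that lie in [E−ε/2, E+ε/2], counted with multiplicity, and let μ₁ ≤ … ≤ μ_p be all eigenvalues of the symmetric matrix F_E := A − B(D−E·I)⁻¹C, counted with multiplicity. Then there exists a strictly increasing map σ : {1,…,m} → {1,…,p} such that |λ_i − μ_{σ(i)}| ≤ 2(γ/ε)²·|λ_i − E| for every i = 1,…,m. -/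
open Matrix

/-- The operator norm of a real matrix acting between Euclidean spaces. -/
noncomputable def opNorm {m n : Type*} [Fintype m] [Fintype n] [DecidableEq n]
    (M : Matrix m n ℝ) : ℝ :=
  ‖LinearMap.toContinuousLinearMap (Matrix.toEuclideanLin M)‖


open Finset
open scoped Matrix.Norms.L2Operator RealInnerProductSpace

lemma opNorm_eq {m n : Type*} [Fintype m] [Fintype n] [DecidableEq n]
    (M : Matrix m n ℝ) : opNorm M = ‖M‖ := rfl
example {n : Type*} [Fintype n] [DecidableEq n] : CompleteSpace (Matrix n n ℝ) := by infer_instance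
lemma norm_one_le {n : Type*} [Fintype n] [DecidableEq n] : ‖(1 : Matrix n n ℝ)‖ ≤ 1 := by
  rw [Matrix.cstar_norm_def, _root_.map_one]
  exact ContinuousLinearMap.norm_id_le
example (Y : Matrix (Fin 3) (Fin 3) ℝ) (h : ‖Y‖ < 1) : IsUnit (1 - Y) := (Units.oneSub Y h).isUnit

lemma inv_one_sub_bound {n : Type*} [Fintype n] [DecidableEq n] (Y : Matrix n n ℝ)
    (hY : ‖Y‖ ≤ 1/2) : IsUnit (1 - Y) ∧ ‖(1 - Y)⁻¹‖ ≤ 2 := by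
  have hY1 : ‖Y‖ < 1 := lt_of_le_of_lt hY (by norm_num)
  have hu : IsUnit (1 - Y) := (Units.oneSub Y hY1).isUnit
  refine ⟨hu, ?_⟩
  have hdet : IsUnit (1 - Y).det := (Matrix.isUnit_iff_isUnit_det _).mp hu
  have h1 : (1 - Y)⁻¹ * (1 - Y) = 1 := Matrix.nonsing_inv_mul _ hdet
  have h2 : (1 - Y)⁻¹ = 1 + (1 - Y)⁻¹ * Y := by
    have := h1
    rw [mul_sub, mul_one] at this
    rw [sub_eq_iff_eq_add] at this
    exact this
  have h3 : ‖(1 - Y)⁻¹‖ ≤ 1 + ‖(1 - Y)⁻¹‖ * (1/2) := by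
    calc ‖(1 - Y)⁻¹‖ = ‖1 + (1 - Y)⁻¹ * Y‖ := by rw [← h2]
    _ ≤ ‖(1 : Matrix n n ℝ)‖ + ‖(1 - Y)⁻¹ * Y‖ := norm_add_le _ _
    _ ≤ 1 + ‖(1 - Y)⁻¹‖ * ‖Y‖ := add_le_add norm_one_le (Matrix.l2_opNorm_mul _ _)
    _ ≤ 1 + ‖(1 - Y)⁻¹‖ * (1/2) := by
        have := norm_nonneg (1 - Y)⁻¹
        nlinarith
  linarith

lemma Dt_unit {q : ℕ} (D : Matrix (Fin q) (Fin q) ℝ) (E ε : ℝ) (hε : 0 < ε)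
    (hDE : IsUnit (D - E • (1 : Matrix (Fin q) (Fin q) ℝ)))
    (hDEinv : ‖(D - E • (1:Matrix (Fin q) (Fin q) ℝ))⁻¹‖ ≤ 1 / ε)
    (t : ℝ) (ht : |t - E| ≤ ε / 2) :
    IsUnit (D - t • (1 : Matrix (Fin q) (Fin q) ℝ)) ∧
      ‖(D - t • (1:Matrix (Fin q) (Fin q) ℝ))⁻¹‖ ≤ 2 / ε := by
  set R := D - E • (1 : Matrix (Fin q) (Fin q) ℝ) with hR
  set Y := (t - E) • R⁻¹ with hYdef
  have hRdet : IsUnit R.det := (Matrix.isUnit_iff_isUnit_det _).mp hDE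
  have hfact : D - t • (1 : Matrix (Fin q) (Fin q) ℝ) = R * (1 - Y) := by
    rw [hYdef, mul_sub, mul_one, mul_smul_comm, Matrix.mul_nonsing_inv _ hRdet, hR]
    rw [sub_smul]
    abel
  have hYn : ‖Y‖ ≤ 1/2 := by
    rw [hYdef, norm_smul, Real.norm_eq_abs]
    calc |t - E| * ‖R⁻¹‖ ≤ (ε/2) * (1/ε) :=
      mul_le_mul ht hDEinv (norm_nonneg _) (by positivity)
    _ = 1/2 := by field_simp
  obtain ⟨hu1, hn1⟩ := inv_one_sub_bound Y hYn
  have hunit : IsUnit (D - t • (1 : Matrix (Fin q) (Fin q) ℝ)) := by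
    rw [hfact]; exact hDE.mul hu1
  refine ⟨hunit, ?_⟩
  rw [hfact, Matrix.mul_inv_rev]
  calc ‖(1 - Y)⁻¹ * R⁻¹‖ ≤ ‖(1 - Y)⁻¹‖ * ‖R⁻¹‖ := Matrix.l2_opNorm_mul _ _
  _ ≤ 2 * (1/ε) := mul_le_mul hn1 hDEinv (norm_nonneg _) (by linarith)
  _ = 2/ε := by ring

lemma resolvent_diff {q : ℕ} (D : Matrix (Fin q) (Fin q) ℝ) (s t : ℝ)
    (hs : IsUnit (D - s • (1 : Matrix (Fin q) (Fin q) ℝ)))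
    (ht : IsUnit (D - t • (1 : Matrix (Fin q) (Fin q) ℝ))) :
    (D - s • 1)⁻¹ - (D - t • 1)⁻¹
      = (s - t) • ((D - s • (1:Matrix (Fin q) (Fin q) ℝ))⁻¹ * (D - t • 1)⁻¹) := by
  have hs' : (D - s•(1:Matrix (Fin q) (Fin q) ℝ))⁻¹ * (D - s•1) = 1 :=
    Matrix.nonsing_inv_mul _ ((Matrix.isUnit_iff_isUnit_det _).mp hs)
  have ht' : (D - t•(1:Matrix (Fin q) (Fin q) ℝ)) * (D - t•1)⁻¹ = 1 :=
    Matrix.mul_nonsing_inv _ ((Matrix.isUnit_iff_isUnit_det _).mp ht)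
  have key : (D - t•(1:Matrix (Fin q) (Fin q) ℝ)) - (D - s•1) = (s - t) • 1 := by
    rw [sub_smul]; abel
  calc (D - s•(1:Matrix (Fin q) (Fin q) ℝ))⁻¹ - (D - t•1)⁻¹
      = (D - s•1)⁻¹ * (((D - t•1) - (D - s•1)) * (D - t•1)⁻¹) := by
        rw [sub_mul, mul_sub, ht', ← mul_assoc, hs', one_mul, mul_one]
    _ = (s - t) • ((D - s•1)⁻¹ * (D - t•1)⁻¹) := by
        rw [key, smul_mul_assoc, one_mul, mul_smul_comm]

lemma Fdiff_norm {p q : ℕ} (A : Matrix (Fin p) (Fin p) ℝ) (B : Matrix (Fin p) (Fin q) ℝ)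
    (C : Matrix (Fin q) (Fin p) ℝ) (D : Matrix (Fin q) (Fin q) ℝ) (s t : ℝ)
    (hs : IsUnit (D - s • (1 : Matrix (Fin q) (Fin q) ℝ)))
    (ht : IsUnit (D - t • (1 : Matrix (Fin q) (Fin q) ℝ))) :
    ‖(A - B * (D - s • 1)⁻¹ * C) - (A - B * (D - t • 1)⁻¹ * C)‖
      ≤ |t - s| * (‖B‖ * (‖(D - t•(1:Matrix (Fin q) (Fin q) ℝ))⁻¹‖
          * ‖(D - s•(1:Matrix (Fin q) (Fin q) ℝ))⁻¹‖ * ‖C‖)) := by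
  have h1 : (A - B * (D - s • 1)⁻¹ * C) - (A - B * (D - t • 1)⁻¹ * C)
      = B * ((D - t•(1:Matrix (Fin q) (Fin q) ℝ))⁻¹ - (D - s•1)⁻¹) * C := by
    rw [sub_sub_sub_cancel_left, Matrix.mul_sub, Matrix.sub_mul]
  rw [h1, resolvent_diff D t s ht hs, Matrix.mul_smul, Matrix.smul_mul, norm_smul,
    Real.norm_eq_abs]
  gcongr
  calc ‖B * ((D - t•(1:Matrix (Fin q) (Fin q) ℝ))⁻¹ * (D - s•1)⁻¹) * C‖
      ≤ ‖B * ((D - t•(1:Matrix (Fin q) (Fin q) ℝ))⁻¹ * (D - s•1)⁻¹)‖ * ‖C‖ :=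
        Matrix.l2_opNorm_mul _ _
    _ ≤ ‖B‖ * (‖(D - t•(1:Matrix (Fin q) (Fin q) ℝ))⁻¹‖ * ‖(D - s•1)⁻¹‖) * ‖C‖ := by
        gcongr
        calc ‖B * ((D - t•(1:Matrix (Fin q) (Fin q) ℝ))⁻¹ * (D - s•1)⁻¹)‖
            ≤ ‖B‖ * ‖(D - t•(1:Matrix (Fin q) (Fin q) ℝ))⁻¹ * (D - s•1)⁻¹‖ :=
              Matrix.l2_opNorm_mul _ _
          _ ≤ ‖B‖ * (‖(D - t•(1:Matrix (Fin q) (Fin q) ℝ))⁻¹‖ * ‖(D - s•1)⁻¹‖) := by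
              gcongr
              exact Matrix.l2_opNorm_mul _ _
    _ = ‖B‖ * (‖(D - t•(1:Matrix (Fin q) (Fin q) ℝ))⁻¹‖ * ‖(D - s•1)⁻¹‖ * ‖C‖) := by ring

lemma blocks_herm {p q : ℕ} {A : Matrix (Fin p) (Fin p) ℝ} {B : Matrix (Fin p) (Fin q) ℝ}
    {C : Matrix (Fin q) (Fin p) ℝ} {D : Matrix (Fin q) (Fin q) ℝ}
    (hK : (Matrix.fromBlocks A B C D).IsHermitian) :
    A.IsHermitian ∧ D.IsHermitian ∧ Bᴴ = C ∧ Cᴴ = B := by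
  have h := hK
  unfold Matrix.IsHermitian at h
  rw [Matrix.fromBlocks_conjTranspose] at h
  refine ⟨?_, ?_, ?_, ?_⟩
  · have := congrArg Matrix.toBlocks₁₁ h; simpa [Matrix.IsSymm, Matrix.toBlocks_fromBlocks₁₁] using this
  · have := congrArg Matrix.toBlocks₂₂ h; simpa [Matrix.IsSymm, Matrix.toBlocks_fromBlocks₂₂] using this
  · have := congrArg Matrix.toBlocks₂₁ h; simpa [Matrix.toBlocks_fromBlocks₂₁] using this
  · have := congrArg Matrix.toBlocks₁₂ h; simpa [Matrix.toBlocks_fromBlocks₁₂] using this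

lemma Ft_herm {p q : ℕ} {A : Matrix (Fin p) (Fin p) ℝ} {B : Matrix (Fin p) (Fin q) ℝ}
    {C : Matrix (Fin q) (Fin p) ℝ} {D : Matrix (Fin q) (Fin q) ℝ}
    (hA : A.IsHermitian) (hD : D.IsHermitian) (hBC : Bᴴ = C) (hCB : Cᴴ = B) (t : ℝ) :
    (A - B * (D - t • 1)⁻¹ * C).IsHermitian := by
  have hRt : (D - t • (1 : Matrix (Fin q) (Fin q) ℝ)).IsHermitian := by
    unfold Matrix.IsHermitian at hD ⊢
    rw [Matrix.conjTranspose_sub, hD]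
    congr 1
    simp [Matrix.conjTranspose_smul]
  unfold Matrix.IsHermitian
  rw [Matrix.conjTranspose_sub, Matrix.conjTranspose_mul, Matrix.conjTranspose_mul,
    Matrix.conjTranspose_nonsing_inv, hRt.eq, hBC, hCB]
  congr 1
  rw [← Matrix.mul_assoc]


section Spectral
variable {n : Type*} [Fintype n] [DecidableEq n]

lemma clm_eigenvectorBasis {M : Matrix n n ℝ} (hM : M.IsHermitian) (j : n) :
    Matrix.toEuclideanCLM (𝕜 := ℝ) M (hM.eigenvectorBasis j)
      = hM.eigenvalues j • hM.eigenvectorBasis j := by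
  apply (WithLp.equiv 2 (n → ℝ)).injective
  change M *ᵥ (hM.eigenvectorBasis j).ofLp = _
  simpa using hM.mulVec_eigenvectorBasis j

lemma clm_symm {M : Matrix n n ℝ} (hM : M.IsHermitian) (x y : EuclideanSpace ℝ n) :
    ⟪Matrix.toEuclideanCLM (𝕜 := ℝ) M x, y⟫ = ⟪x, Matrix.toEuclideanCLM (𝕜 := ℝ) M y⟫ := by
  have hs := (Matrix.isHermitian_iff_isSymmetric).mp hM
  exact hs x y

lemma coeff_zero_of_mem_span (b : OrthonormalBasis n ℝ (EuclideanSpace ℝ n)) (S : Finset n)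
    (v : EuclideanSpace ℝ n) (hv : v ∈ Submodule.span ℝ (⇑b '' ↑S)) :
    ∀ j ∉ S, ⟪b j, v⟫ = 0 := by
  induction hv using Submodule.span_induction with
  | mem x hx =>
    intro j hj
    obtain ⟨i, hiS, rfl⟩ := hx
    have := b.orthonormal
    rw [orthonormal_iff_ite] at this
    rw [this, if_neg]
    rintro rfl; exact absurd hiS hj
  | zero => intro j _; simp
  | add x y _ _ hx hy => intro j hj; rw [inner_add_right, hx j hj, hy j hj]; ring
  | smul a x _ hx => intro j hj; rw [inner_smul_right, hx j hj]; simp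

lemma repr_sum_of_mem_span (b : OrthonormalBasis n ℝ (EuclideanSpace ℝ n)) (S : Finset n)
    (v : EuclideanSpace ℝ n) (hv : v ∈ Submodule.span ℝ (⇑b '' ↑S)) :
    v = ∑ j ∈ S, ⟪b j, v⟫ • b j := by
  have h0 := coeff_zero_of_mem_span b S v hv
  have hrepr := b.sum_repr' v
  conv_lhs => rw [← hrepr]
  symm
  apply Finset.sum_subset (Finset.subset_univ S)
  intro j _ hj
  rw [h0 j hj, zero_smul]

lemma rayleigh_formula (b : OrthonormalBasis n ℝ (EuclideanSpace ℝ n))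
    (T : EuclideanSpace ℝ n →L[ℝ] EuclideanSpace ℝ n) (μ : n → ℝ)
    (hT : ∀ j, T (b j) = μ j • b j) (S : Finset n) (v : EuclideanSpace ℝ n)
    (hv : v ∈ Submodule.span ℝ (⇑b '' ↑S)) :
    ⟪v, T v⟫ = ∑ j ∈ S, μ j * ⟪b j, v⟫ ^ 2 ∧ ‖v‖ ^ 2 = ∑ j ∈ S, ⟪b j, v⟫ ^ 2 := by
  have hOn := b.orthonormal
  rw [orthonormal_iff_ite] at hOn
  set c : n → ℝ := fun j => ⟪b j, v⟫ with hc
  have hv' : v = ∑ j ∈ S, c j • b j := repr_sum_of_mem_span b S v hv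
  have hTv : T v = ∑ j ∈ S, (c j * μ j) • b j := by
    conv_lhs => rw [hv']
    rw [map_sum]
    apply Finset.sum_congr rfl
    intro j _
    rw [_root_.map_smul, hT j, smul_smul, mul_comm]
  have key : ∀ d : n → ℝ, ⟪v, ∑ j ∈ S, d j • b j⟫ = ∑ j ∈ S, c j * d j := by
    intro d
    conv_lhs => rw [hv']
    rw [sum_inner]
    apply Finset.sum_congr rfl
    intro i hi
    rw [real_inner_smul_left, inner_sum]
    have : ∀ j ∈ S, ⟪b i, d j • b j⟫ = if i = j then d i else 0 := by
      intro j _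
      rw [real_inner_smul_right, hOn]
      by_cases h : i = j
      · subst h; simp
      · rw [if_neg h, if_neg h, mul_zero]
    rw [Finset.sum_congr rfl this, Finset.sum_ite_eq S i (fun _ => d i), if_pos hi]
  constructor
  · rw [hTv, key]
    apply Finset.sum_congr rfl
    intro j _
    ring
  · rw [← real_inner_self_eq_norm_sq]
    conv_lhs => rw [show ⟪v,v⟫ = ⟪v, ∑ j ∈ S, c j • b j⟫ by rw [← hv']]
    rw [key]
    apply Finset.sum_congr rfl
    intro j _
    ring

lemma finrank_span_onb (b : OrthonormalBasis n ℝ (EuclideanSpace ℝ n)) (S : Finset n) :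
    Module.finrank ℝ (Submodule.span ℝ (⇑b '' ↑S)) = S.card := by
  have hli : LinearIndependent ℝ (fun i : ↥S => b i) :=
    b.orthonormal.linearIndependent.comp Subtype.val Subtype.val_injective
  have hrange : Set.range (fun i : ↥S => b i) = ⇑b '' ↑S := by
    ext x; simp [Set.mem_image]
  rw [← hrange, finrank_span_eq_card hli, Fintype.card_coe]

end Spectral

section Weyl
variable {r : ℕ}

noncomputable def sEig {M : Matrix (Fin r) (Fin r) ℝ} (hM : M.IsHermitian) : Fin r → ℝ :=
  hM.eigenvalues ∘ Tuple.sort hM.eigenvalues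

lemma sEig_mono {M : Matrix (Fin r) (Fin r) ℝ} (hM : M.IsHermitian) : Monotone (sEig hM) :=
  Tuple.monotone_sort _

lemma weyl {M N : Matrix (Fin r) (Fin r) ℝ} (hM : M.IsHermitian) (hN : N.IsHermitian)
    (k : Fin r) : sEig hM k ≤ sEig hN k + ‖M - N‖ := by
  classical
  set πM := Tuple.sort hM.eigenvalues
  set πN := Tuple.sort hN.eigenvalues
  set SM : Finset (Fin r) := (Finset.univ.filter fun j => k ≤ j).image πM with hSM
  set SN : Finset (Fin r) := (Finset.univ.filter fun j => j ≤ k).image πN with hSN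
  have hcardM : SM.card = (Finset.univ.filter fun j : Fin r => k ≤ j).card :=
    Finset.card_image_of_injective _ πM.injective
  have hcardN : SN.card = (Finset.univ.filter fun j : Fin r => j ≤ k).card :=
    Finset.card_image_of_injective _ πN.injective
  have hcards : SM.card + SN.card = r + 1 := by
    rw [hcardM, hcardN]
    have h1 : ((Finset.univ.filter fun j : Fin r => k ≤ j) ∪
        (Finset.univ.filter fun j : Fin r => j ≤ k)) = Finset.univ := by
      ext x; simp [le_total k x]
    have h2 : ((Finset.univ.filter fun j : Fin r => k ≤ j) ∩
        (Finset.univ.filter fun j : Fin r => j ≤ k)) = {k} := by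
      ext x
      simp only [Finset.mem_inter, Finset.mem_filter, Finset.mem_univ, true_and,
        Finset.mem_singleton]
      constructor
      · rintro ⟨h3, h4⟩; exact le_antisymm h4 h3
      · rintro rfl; exact ⟨le_rfl, le_rfl⟩
    have := Finset.card_union_add_card_inter
      (Finset.univ.filter fun j : Fin r => k ≤ j)
      (Finset.univ.filter fun j : Fin r => j ≤ k)
    rw [h1, h2] at this
    simp only [Finset.card_univ, Fintype.card_fin, Finset.card_singleton] at this
    omega
  set W := Submodule.span ℝ (⇑hM.eigenvectorBasis '' ↑SM) with hW
  set V := Submodule.span ℝ (⇑hN.eigenvectorBasis '' ↑SN) with hV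
  have hdimW : Module.finrank ℝ W = SM.card := finrank_span_onb _ _
  have hdimV : Module.finrank ℝ V = SN.card := finrank_span_onb _ _
  -- intersection is nontrivial
  have hpos : V ⊓ W ≠ ⊥ := by
    intro hbot
    have hsum := Submodule.finrank_sup_add_finrank_inf_eq V W
    rw [hbot, finrank_bot] at hsum
    have hle : Module.finrank ℝ ↥(V ⊔ W) ≤ r := by
      have := Submodule.finrank_le (V ⊔ W)
      rwa [finrank_euclideanSpace, Fintype.card_fin] at this
    omega
  obtain ⟨v, hvmem, hvne⟩ := Submodule.exists_mem_ne_zero_of_ne_bot hpos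
  have hvV : v ∈ V := (Submodule.mem_inf.mp hvmem).1
  have hvW : v ∈ W := (Submodule.mem_inf.mp hvmem).2
  -- Rayleigh bounds
  have hTM : ∀ j, Matrix.toEuclideanCLM (𝕜 := ℝ) M (hM.eigenvectorBasis j)
      = hM.eigenvalues j • hM.eigenvectorBasis j := clm_eigenvectorBasis hM
  have hTN : ∀ j, Matrix.toEuclideanCLM (𝕜 := ℝ) N (hN.eigenvectorBasis j)
      = hN.eigenvalues j • hN.eigenvectorBasis j := clm_eigenvectorBasis hN
  obtain ⟨hipM, hnM⟩ := rayleigh_formula hM.eigenvectorBasis _ _ hTM SM v hvW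
  obtain ⟨hipN, hnN⟩ := rayleigh_formula hN.eigenvectorBasis _ _ hTN SN v hvV
  have hv0 : (0:ℝ) < ‖v‖ := norm_pos_iff.mpr hvne
  have hnormpos : (0:ℝ) < ‖v‖ ^ 2 := by positivity
  have hlowM : sEig hM k * ‖v‖ ^ 2 ≤ ⟪v, Matrix.toEuclideanCLM (𝕜 := ℝ) M v⟫ := by
    rw [hipM, hnM, Finset.mul_sum]
    apply Finset.sum_le_sum
    intro j hj
    have : sEig hM k ≤ hM.eigenvalues j := by
      rw [hSM] at hj
      obtain ⟨j0, hj0, rfl⟩ := Finset.mem_image.mp hj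
      have hj0' : k ≤ j0 := (Finset.mem_filter.mp hj0).2
      exact sEig_mono hM hj0'
    nlinarith [sq_nonneg (⟪hM.eigenvectorBasis j, v⟫)]
  have hupN : ⟪v, Matrix.toEuclideanCLM (𝕜 := ℝ) N v⟫ ≤ sEig hN k * ‖v‖ ^ 2 := by
    rw [hipN, hnN, Finset.mul_sum]
    apply Finset.sum_le_sum
    intro j hj
    have : hN.eigenvalues j ≤ sEig hN k := by
      rw [hSN] at hj
      obtain ⟨j0, hj0, rfl⟩ := Finset.mem_image.mp hj
      have hj0' : j0 ≤ k := (Finset.mem_filter.mp hj0).2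
      exact sEig_mono hN hj0'
    nlinarith [sq_nonneg (⟪hN.eigenvectorBasis j, v⟫)]
  have hpert : ⟪v, Matrix.toEuclideanCLM (𝕜 := ℝ) M v⟫
      ≤ ⟪v, Matrix.toEuclideanCLM (𝕜 := ℝ) N v⟫ + ‖M - N‖ * ‖v‖ ^ 2 := by
    have hmap : Matrix.toEuclideanCLM (𝕜 := ℝ) M v
        = Matrix.toEuclideanCLM (𝕜 := ℝ) N v + Matrix.toEuclideanCLM (𝕜 := ℝ) (M - N) v := by
      rw [map_sub]
      simp
    rw [hmap, inner_add_right]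
    have habs : ⟪v, Matrix.toEuclideanCLM (𝕜 := ℝ) (M - N) v⟫ ≤ ‖M - N‖ * ‖v‖ ^ 2 := by
      calc ⟪v, Matrix.toEuclideanCLM (𝕜 := ℝ) (M - N) v⟫
          ≤ ‖v‖ * ‖Matrix.toEuclideanCLM (𝕜 := ℝ) (M - N) v‖ := real_inner_le_norm _ _
        _ ≤ ‖v‖ * (‖M - N‖ * ‖v‖) := by
            gcongr
            rw [Matrix.cstar_norm_def]
            exact (Matrix.toEuclideanCLM (𝕜 := ℝ) (M - N)).le_opNorm v
        _ = ‖M - N‖ * ‖v‖ ^ 2 := by ring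
    linarith
  have final : sEig hM k * ‖v‖ ^ 2 ≤ (sEig hN k + ‖M - N‖) * ‖v‖ ^ 2 := by nlinarith
  exact le_of_mul_le_mul_right (by linarith [final]) hnormpos

lemma weyl_abs {M N : Matrix (Fin r) (Fin r) ℝ} (hM : M.IsHermitian) (hN : N.IsHermitian)
    (k : Fin r) : |sEig hM k - sEig hN k| ≤ ‖M - N‖ := by
  rw [abs_sub_le_iff]
  constructor
  · linarith [weyl hM hN k]
  · have := weyl hN hM k
    rw [norm_sub_rev] at this
    linarith

end Weyl

section Count
variable {n : Type*} [Fintype n] [DecidableEq n]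

lemma card_eig_le_finrank {M : Matrix n n ℝ} (hM : M.IsHermitian) (t : ℝ) :
    (Finset.univ.filter fun i => hM.eigenvalues i = t).card
      ≤ Module.finrank ℝ (Module.End.eigenspace (Matrix.toEuclideanLin M) t) := by
  classical
  set b := hM.eigenvectorBasis
  have hmem : ∀ i : {i // hM.eigenvalues i = t},
      (b i : EuclideanSpace ℝ n) ∈ Module.End.eigenspace (Matrix.toEuclideanLin M) t := by
    intro i
    rw [Module.End.mem_eigenspace_iff]
    have h1 : Matrix.toEuclideanLin M (b i) = Matrix.toEuclideanCLM (𝕜 := ℝ) M (b i) := by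
      rw [← Matrix.coe_toEuclideanCLM_eq_toEuclideanLin]; rfl
    rw [h1, clm_eigenvectorBasis hM, i.2]
  set g : {i // hM.eigenvalues i = t} → ↥(Module.End.eigenspace (Matrix.toEuclideanLin M) t) :=
    fun i => ⟨b i, hmem i⟩ with hg
  have hli : LinearIndependent ℝ g := by
    have h1 : LinearIndependent ℝ (fun i : {i // hM.eigenvalues i = t} => (b i : EuclideanSpace ℝ n)) :=
      b.orthonormal.linearIndependent.comp Subtype.val Subtype.val_injective
    apply LinearIndependent.of_comp (Module.End.eigenspace (Matrix.toEuclideanLin M) t).subtype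
    exact h1
  have := hli.fintype_card_le_finrank
  rwa [Fintype.card_subtype] at this

lemma finrank_le_card_eig {M : Matrix n n ℝ} (hM : M.IsHermitian) (t : ℝ) :
    Module.finrank ℝ (Module.End.eigenspace (Matrix.toEuclideanLin M) t)
      ≤ (Finset.univ.filter fun i => hM.eigenvalues i = t).card := by
  classical
  set b := hM.eigenvectorBasis
  set S : Finset n := Finset.univ.filter fun i => hM.eigenvalues i = t with hS
  have hle : Module.End.eigenspace (Matrix.toEuclideanLin M) t
      ≤ Submodule.span ℝ (⇑b '' ↑S) := by
    intro v hv
    rw [Module.End.mem_eigenspace_iff] at hv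
    have hv' : Matrix.toEuclideanCLM (𝕜 := ℝ) M v = t • v := by
      rw [← hv, ← Matrix.coe_toEuclideanCLM_eq_toEuclideanLin]; rfl
    have hcoeff : ∀ j, j ∉ S → ⟪b j, v⟫ = 0 := by
      intro j hj
      have hne : hM.eigenvalues j ≠ t := by
        intro h; exact hj (Finset.mem_filter.mpr ⟨Finset.mem_univ _, h⟩)
      have h1 : ⟪Matrix.toEuclideanCLM (𝕜 := ℝ) M (b j), v⟫
          = ⟪b j, Matrix.toEuclideanCLM (𝕜 := ℝ) M v⟫ := clm_symm hM _ _
      rw [clm_eigenvectorBasis hM, hv', real_inner_smul_left, real_inner_smul_right] at h1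
      have : (hM.eigenvalues j - t) * ⟪b j, v⟫ = 0 := by linarith
      rcases mul_eq_zero.mp this with h | h
      · exact absurd (by linarith : hM.eigenvalues j = t) hne
      · exact h
    have hrepr := b.sum_repr' v
    rw [← hrepr]
    apply Submodule.sum_mem
    intro j _
    by_cases hjS : j ∈ S
    · exact Submodule.smul_mem _ _ (Submodule.subset_span ⟨j, hjS, rfl⟩)
    · rw [hcoeff j hjS, zero_smul]; exact Submodule.zero_mem _
  calc Module.finrank ℝ (Module.End.eigenspace (Matrix.toEuclideanLin M) t)
      ≤ Module.finrank ℝ (Submodule.span ℝ (⇑b '' ↑S)) := Submodule.finrank_mono hle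
    _ = S.card := finrank_span_onb _ _

end Count

section BlockTransfer
variable {p q : ℕ}

/-- eigenspace membership in terms of mulVec -/
lemma mem_eigenspace_mulVec {m : Type*} [Fintype m] [DecidableEq m] (M : Matrix m m ℝ)
    (t : ℝ) (v : EuclideanSpace ℝ m) :
    v ∈ Module.End.eigenspace (Matrix.toEuclideanLin M) t
      ↔ M *ᵥ (WithLp.equiv 2 (m → ℝ)) v = t • (WithLp.equiv 2 (m → ℝ)) v := by
  rw [Module.End.mem_eigenspace_iff, Matrix.toEuclideanLin_apply]
  constructor
  · intro h
    have := congrArg (WithLp.equiv 2 (m → ℝ)) h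
    simpa using this
  · intro h
    change M *ᵥ v.ofLp = t • v.ofLp at h
    rw [h]
    simp

lemma finrank_eig_block_le (A : Matrix (Fin p) (Fin p) ℝ) (B : Matrix (Fin p) (Fin q) ℝ)
    (C : Matrix (Fin q) (Fin p) ℝ) (D : Matrix (Fin q) (Fin q) ℝ) (t : ℝ)
    (hDt : IsUnit (D - t • (1 : Matrix (Fin q) (Fin q) ℝ))) :
    Module.finrank ℝ
        (Module.End.eigenspace (Matrix.toEuclideanLin (Matrix.fromBlocks A B C D)) t)
      ≤ Module.finrank ℝ
        (Module.End.eigenspace (Matrix.toEuclideanLin (A - B * (D - t • 1)⁻¹ * C)) t) := by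
  classical
  set Rt := D - t • (1 : Matrix (Fin q) (Fin q) ℝ) with hRt
  have hdet : IsUnit Rt.det := (Matrix.isUnit_iff_isUnit_det _).mp hDt
  set Φ : EuclideanSpace ℝ (Fin p ⊕ Fin q) →ₗ[ℝ] EuclideanSpace ℝ (Fin p) :=
    (WithLp.linearEquiv 2 ℝ (Fin p → ℝ)).symm.toLinearMap ∘ₗ
      (LinearMap.funLeft ℝ ℝ Sum.inl) ∘ₗ (WithLp.linearEquiv 2 ℝ ((Fin p ⊕ Fin q) → ℝ)).toLinearMap
    with hΦ
  -- key structural fact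
  have key : ∀ v ∈ Module.End.eigenspace (Matrix.toEuclideanLin (Matrix.fromBlocks A B C D)) t,
      ((Matrix.fromBlocks A B C D) *ᵥ (WithLp.equiv 2 _) v = t • (WithLp.equiv 2 _) v) :=
    fun v hv => (mem_eigenspace_mulVec _ _ _).mp hv
  have hxy : ∀ v : EuclideanSpace ℝ (Fin p ⊕ Fin q),
      v ∈ Module.End.eigenspace (Matrix.toEuclideanLin (Matrix.fromBlocks A B C D)) t →
      (A - B * Rt⁻¹ * C) *ᵥ ((WithLp.equiv 2 _) v ∘ Sum.inl) = t • ((WithLp.equiv 2 _) v ∘ Sum.inl)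
        ∧ ((WithLp.equiv 2 _) v ∘ Sum.inr) = -(Rt⁻¹ *ᵥ (C *ᵥ ((WithLp.equiv 2 _) v ∘ Sum.inl))) := by
    intro v hv
    have h := key v hv
    set w := (WithLp.equiv 2 ((Fin p ⊕ Fin q) → ℝ)) v with hw
    set x := w ∘ Sum.inl with hx
    set y := w ∘ Sum.inr with hy
    have hwe : w = Sum.elim x y := by funext i; cases i <;> rfl
    rw [hwe, Matrix.fromBlocks_mulVec] at h
    have h1 : A *ᵥ x + B *ᵥ y = t • x := by
      funext i; have := congrFun h (Sum.inl i); simpa using this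
    have h2 : C *ᵥ x + D *ᵥ y = t • y := by
      funext i; have := congrFun h (Sum.inr i); simpa using this
    have h3 : Rt *ᵥ y = -(C *ᵥ x) := by
      rw [hRt, Matrix.sub_mulVec, Matrix.smul_mulVec, Matrix.one_mulVec]
      have : D *ᵥ y = t • y - C *ᵥ x := by rw [← h2]; abel
      rw [this]; abel
    have hy' : y = -(Rt⁻¹ *ᵥ (C *ᵥ x)) := by
      have h4 := congrArg (fun z => Rt⁻¹ *ᵥ z) h3
      simp only [Matrix.mulVec_mulVec, Matrix.mulVec_neg] at h4
      rw [Matrix.mulVec_mulVec, ← h4, Matrix.nonsing_inv_mul _ hdet, Matrix.one_mulVec]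
    constructor
    · have hBy : B *ᵥ y = -(B *ᵥ (Rt⁻¹ *ᵥ (C *ᵥ x))) := by rw [hy']; simp [Matrix.mulVec_neg]
      rw [Matrix.sub_mulVec]
      have hms : (B * Rt⁻¹ * C) *ᵥ x = B *ᵥ (Rt⁻¹ *ᵥ (C *ᵥ x)) := by
        rw [Matrix.mulVec_mulVec, Matrix.mulVec_mulVec]
      rw [hms, ← h1, hBy]
      abel
    · exact hy'
  have hmaps : ∀ v ∈ Module.End.eigenspace (Matrix.toEuclideanLin (Matrix.fromBlocks A B C D)) t,
      Φ v ∈ Module.End.eigenspace (Matrix.toEuclideanLin (A - B * Rt⁻¹ * C)) t := by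
    intro v hv
    rw [mem_eigenspace_mulVec]
    have hΦv : (WithLp.equiv 2 (Fin p → ℝ)) (Φ v) = (WithLp.equiv 2 _) v ∘ Sum.inl := rfl
    rw [hΦv]
    exact (hxy v hv).1
  set f := (Matrix.toEuclideanLin (A - B * Rt⁻¹ * C) : Module.End ℝ (EuclideanSpace ℝ (Fin p)))
  have hinj : Function.Injective (Φ.restrict hmaps) := by
    intro a b hab
    have h1 : Φ a.1 = Φ b.1 := congrArg Subtype.val hab
    have hzero : ∀ v ∈ Module.End.eigenspace
        (Matrix.toEuclideanLin (Matrix.fromBlocks A B C D)) t, Φ v = 0 → v = 0 := by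
      intro v hv hv0
      have hx0 : (WithLp.equiv 2 _) v ∘ Sum.inl = (0 : Fin p → ℝ) := by
        have := congrArg (WithLp.equiv 2 (Fin p → ℝ)) hv0
        exact this
      have hy0 := (hxy v hv).2
      rw [hx0] at hy0
      simp only [Matrix.mulVec_zero, neg_zero] at hy0
      have : (WithLp.equiv 2 ((Fin p ⊕ Fin q) → ℝ)) v = 0 := by
        funext i
        cases i with
        | inl i => exact congrFun hx0 i
        | inr i => exact congrFun hy0 i
      simpa using congrArg (WithLp.equiv 2 ((Fin p ⊕ Fin q) → ℝ)).symm this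
    have hsub : a.1 - b.1 ∈ Module.End.eigenspace
        (Matrix.toEuclideanLin (Matrix.fromBlocks A B C D)) t :=
      Submodule.sub_mem _ a.2 b.2
    have : a.1 - b.1 = 0 := hzero _ hsub (by rw [map_sub, h1, sub_self])
    exact Subtype.ext (sub_eq_zero.mp this)
  exact LinearMap.finrank_le_finrank_of_injective hinj

end BlockTransfer

lemma card_sEig_eq {r : ℕ} {M : Matrix (Fin r) (Fin r) ℝ} (hM : M.IsHermitian) (t : ℝ) :
    (Finset.univ.filter fun k => sEig hM k = t).card
      = (Finset.univ.filter fun k => hM.eigenvalues k = t).card := by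
  classical
  apply Finset.card_bij (fun k _ => Tuple.sort hM.eigenvalues k)
  · intro a ha
    rw [Finset.mem_filter] at ha ⊢
    exact ⟨Finset.mem_univ _, ha.2⟩
  · intro a _ b _ hab
    exact (Tuple.sort hM.eigenvalues).injective hab
  · intro b hb
    rw [Finset.mem_filter] at hb
    refine ⟨(Tuple.sort hM.eigenvalues).symm b, ?_, ?_⟩
    · rw [Finset.mem_filter]
      refine ⟨Finset.mem_univ _, ?_⟩
      show hM.eigenvalues (Tuple.sort hM.eigenvalues ((Tuple.sort hM.eigenvalues).symm b)) = t
      rw [Equiv.apply_symm_apply]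
      exact hb.2
    · rw [Equiv.apply_symm_apply]

/-- for the symmetric block matrix `K = [[A,B],[Bᵀ,D]]` with
`‖(D-E·I)⁻¹‖ ≤ 1/ε`, `‖B‖ ≤ γ`, `‖C‖ ≤ γ`, `γ ≤ ε/4`, every eigenvalue of `K` in
`[E-ε/2, E+ε/2]` can be matched, injectively and monotonically (counting multiplicity),
with an eigenvalue of the Schur complement `F_E = A - B(D-E·I)⁻¹Bᵀ` at distance at most
`2(γ/ε)²·|λ_i - E|`. -/
theorem schur_spectrum_close {p q : ℕ}
    (A : Matrix (Fin p) (Fin p) ℝ) (B : Matrix (Fin p) (Fin q) ℝ)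
    (C : Matrix (Fin q) (Fin p) ℝ) (D : Matrix (Fin q) (Fin q) ℝ)
    (hC : C = Bᵀ)
    (E ε γ : ℝ) (hε : 0 < ε) (hγ : 0 < γ) (hγε : γ ≤ ε / 4)
    (hK : (Matrix.fromBlocks A B C D).IsHermitian)
    (hDE : IsUnit (D - E • (1 : Matrix (Fin q) (Fin q) ℝ)))
    (hDEinv : opNorm (D - E • 1)⁻¹ ≤ 1 / ε)
    (hB : opNorm B ≤ γ) (hCn : opNorm C ≤ γ)
    (hFE : (A - B * (D - E • 1)⁻¹ * C).IsHermitian) :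
    ∃ σ : {i : Fin p ⊕ Fin q // hK.eigenvalues i ∈ Set.Icc (E - ε / 2) (E + ε / 2)} → Fin p,
      Function.Injective σ ∧
      (∀ i j, hK.eigenvalues i.1 < hK.eigenvalues j.1 →
        hFE.eigenvalues (σ i) ≤ hFE.eigenvalues (σ j)) ∧
      ∀ i, |hK.eigenvalues i.1 - hFE.eigenvalues (σ i)| ≤
        2 * (γ / ε) ^ 2 * |hK.eigenvalues i.1 - E| := by
  classical
  obtain ⟨hA, hD, hBC, hCB⟩ := blocks_herm hK
  rw [opNorm_eq] at hDEinv hB hCn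
  have hγ0 : (0:ℝ) ≤ γ := le_of_lt hγ
  have hwin : ∀ t : ℝ, t ∈ Set.Icc (E - ε / 2) (E + ε / 2) → |t - E| ≤ ε / 2 := by
    intro t ht
    rw [Set.mem_Icc] at ht
    rw [abs_sub_le_iff]
    constructor <;> linarith [ht.1, ht.2]
  -- units and inverse bounds
  have hDt : ∀ t : ℝ, |t - E| ≤ ε / 2 →
      IsUnit (D - t • (1 : Matrix (Fin q) (Fin q) ℝ)) ∧
        ‖(D - t • (1 : Matrix (Fin q) (Fin q) ℝ))⁻¹‖ ≤ 2 / ε :=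
    fun t ht => Dt_unit D E ε hε hDE hDEinv t ht
  -- the Schur complement family
  set Ft : ℝ → Matrix (Fin p) (Fin p) ℝ := fun t => A - B * (D - t • 1)⁻¹ * C with hFtdef
  have hFt : ∀ t : ℝ, (Ft t).IsHermitian := fun t => Ft_herm hA hD hBC hCB t
  -- distance bounds between Schur complements
  have hdistE : ∀ t : ℝ, |t - E| ≤ ε / 2 →
      ‖Ft t - Ft E‖ ≤ 2 * (γ / ε) ^ 2 * |t - E| := by
    intro t ht
    have h1 := Fdiff_norm A B C D t E (hDt t ht).1 hDE
    have h2 : ‖(D - E • (1 : Matrix (Fin q) (Fin q) ℝ))⁻¹‖ * ‖(D - t • (1 : Matrix (Fin q) (Fin q) ℝ))⁻¹‖ * ‖C‖ ≤ (1/ε) * (2/ε) * γ :=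
      mul_le_mul (mul_le_mul hDEinv (hDt t ht).2 (norm_nonneg _) (by positivity))
        hCn (norm_nonneg _) (by positivity)
    have h3 : ‖B‖ * (‖(D - E • (1 : Matrix (Fin q) (Fin q) ℝ))⁻¹‖ * ‖(D - t • (1 : Matrix (Fin q) (Fin q) ℝ))⁻¹‖ * ‖C‖) ≤ γ * ((1/ε) * (2/ε) * γ) := by
      apply mul_le_mul hB h2 (by positivity) hγ0
    calc ‖Ft t - Ft E‖ ≤ |E - t| * (‖B‖ * (‖(D - E • (1 : Matrix (Fin q) (Fin q) ℝ))⁻¹‖ * ‖(D - t • (1 : Matrix (Fin q) (Fin q) ℝ))⁻¹‖ * ‖C‖)) := h1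
      _ ≤ |E - t| * (γ * ((1/ε) * (2/ε) * γ)) := by
          apply mul_le_mul_of_nonneg_left h3 (abs_nonneg _)
      _ = 2 * (γ / ε) ^ 2 * |t - E| := by
          rw [abs_sub_comm E t]
          field_simp
  have hdistW : ∀ s t : ℝ, |s - E| ≤ ε / 2 → |t - E| ≤ ε / 2 →
      ‖Ft s - Ft t‖ ≤ (1/4) * |t - s| := by
    intro s t hs ht
    have h1 := Fdiff_norm A B C D s t (hDt s hs).1 (hDt t ht).1
    have h2 : ‖B‖ * (‖(D - t • (1 : Matrix (Fin q) (Fin q) ℝ))⁻¹‖ * ‖(D - s • (1 : Matrix (Fin q) (Fin q) ℝ))⁻¹‖ * ‖C‖) ≤ γ * ((2/ε) * (2/ε) * γ) := by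
      apply mul_le_mul hB ?_ (by positivity) hγ0
      exact mul_le_mul (mul_le_mul (hDt t ht).2 (hDt s hs).2 (norm_nonneg _) (by positivity))
        hCn (norm_nonneg _) (by positivity)
    have h4 : γ * ((2/ε) * (2/ε) * γ) ≤ 1/4 := by
      have hγε2 : γ / ε ≤ 1/4 := by
        rw [div_le_iff₀ hε]; linarith
      have : γ * ((2/ε) * (2/ε) * γ) = 4 * (γ/ε)^2 := by field_simp; ring
      rw [this]
      nlinarith [div_nonneg hγ0 (le_of_lt hε)]
    calc ‖Ft s - Ft t‖ ≤ |t - s| * (‖B‖ * (‖(D - t • (1 : Matrix (Fin q) (Fin q) ℝ))⁻¹‖ * ‖(D - s • (1 : Matrix (Fin q) (Fin q) ℝ))⁻¹‖ * ‖C‖)) := h1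
      _ ≤ |t - s| * (1/4) := mul_le_mul_of_nonneg_left (le_trans h2 h4) (abs_nonneg _)
      _ = (1/4) * |t - s| := mul_comm _ _
  -- sorted eigenvalue index sets
  set T : ℝ → Finset (Fin p) := fun t => Finset.univ.filter fun k => sEig (hFt t) k = t with hTdef
  set S := {i : Fin p ⊕ Fin q // hK.eigenvalues i ∈ Set.Icc (E - ε / 2) (E + ε / 2)} with hSdef
  set lam : S → ℝ := fun i => hK.eigenvalues i.1 with hlamdef
  set Cl : ℝ → Finset S := fun t => Finset.univ.filter fun i => lam i = t with hCldef
  -- multiplicity inequality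
  have hcard : ∀ t : ℝ, |t - E| ≤ ε / 2 → (Cl t).card ≤ (T t).card := by
    intro t ht
    have h1 : (Cl t).card ≤ (Finset.univ.filter fun i0 : Fin p ⊕ Fin q => hK.eigenvalues i0 = t).card := by
      apply Finset.card_le_card_of_injOn (fun i => i.1)
      · intro i hi
        rw [Finset.mem_coe, Finset.mem_filter] at hi ⊢
        exact ⟨Finset.mem_univ _, hi.2⟩
      · intro a _ b _ hab
        exact Subtype.ext hab
    have h2 := card_eig_le_finrank hK t
    have h3 : Module.finrank ℝ
          (Module.End.eigenspace (Matrix.toEuclideanLin (Matrix.fromBlocks A B C D)) t)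
        ≤ Module.finrank ℝ (Module.End.eigenspace (Matrix.toEuclideanLin (Ft t)) t) :=
      finrank_eig_block_le A B C D t (hDt t ht).1
    have h4 := finrank_le_card_eig (hFt t) t
    have h5 := card_sEig_eq (hFt t) t
    show (Cl t).card ≤ (Finset.univ.filter fun k => sEig (hFt t) k = t).card
    omega
  -- ordering of index sets
  have hcross : ∀ s t : ℝ, |s - E| ≤ ε / 2 → |t - E| ≤ ε / 2 → s < t →
      ∀ k ∈ T s, ∀ k' ∈ T t, k < k' := by
    intro s t hs ht hst k hk k' hk'
    have hkv : sEig (hFt s) k = s := by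
      have : k ∈ Finset.univ.filter fun k => sEig (hFt s) k = s := hk
      exact (Finset.mem_filter.mp this).2
    have hkv' : sEig (hFt t) k' = t := by
      have : k' ∈ Finset.univ.filter fun k => sEig (hFt t) k = t := hk'
      exact (Finset.mem_filter.mp this).2
    have hWeyl : sEig (hFt t) k ≤ sEig (hFt s) k + ‖Ft t - Ft s‖ := weyl (hFt t) (hFt s) k
    have hdist := hdistW t s ht hs
    rw [abs_sub_comm] at hdist
    have hlt : sEig (hFt t) k < t := by
      have habs : |t - s| = t - s := abs_of_pos (by linarith)
      rw [habs] at hdist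
      calc sEig (hFt t) k ≤ sEig (hFt s) k + ‖Ft t - Ft s‖ := hWeyl
        _ ≤ s + (1/4) * (t - s) := by rw [hkv]; linarith [hdist]
        _ < t := by linarith
    by_contra hcon
    push_neg at hcon
    have : sEig (hFt t) k' ≤ sEig (hFt t) k := sEig_mono (hFt t) hcon
    rw [hkv'] at this
    linarith
  -- permutation sorting the eigenvalues of F_E
  set π := Tuple.sort hFE.eigenvalues with hπ
  have hsFE : ∀ k, hFE.eigenvalues (π k) = sEig hFE k := fun k => rfl
  have hFtE : sEig (hFt E) = sEig hFE := rfl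
  -- the choice map within a class
  set pick : (t : ℝ) → (Cl t).card ≤ (T t).card → {x : S // x ∈ Cl t} → Fin p :=
    fun t hle a => (T t).orderEmbOfFin rfl (Fin.castLE hle ((Cl t).equivFin a)) with hpickdef
  have hpick_mem : ∀ t hle a, pick t hle a ∈ T t := by
    intro t hle a
    exact Finset.orderEmbOfFin_mem _ _ _
  have hpick_inj : ∀ t t' (e : t = t') hle hle' (a : {x : S // x ∈ Cl t})
      (a' : {x : S // x ∈ Cl t'}), pick t hle a = pick t' hle' a' → (a : S) = (a' : S) := by
    intro t t' e hle hle' a a' hpp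
    subst e
    rw [hpickdef] at hpp
    have h1 := ((T t).orderEmbOfFin rfl).injective hpp
    have h2 := Fin.castLE_injective hle h1
    have h3 := (Cl t).equivFin.injective h2
    rw [h3]
  have hmemCl : ∀ i : S, i ∈ Cl (lam i) := by
    intro i
    rw [hCldef]
    exact Finset.mem_filter.mpr ⟨Finset.mem_univ _, rfl⟩
  have hwin' : ∀ i : S, |lam i - E| ≤ ε / 2 := fun i => hwin _ i.2
  refine ⟨fun i => π (pick (lam i) (hcard _ (hwin' i)) ⟨i, hmemCl i⟩), ?_, ?_, ?_⟩
  · -- injectivity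
    intro i j hij
    have hkk : pick (lam i) (hcard _ (hwin' i)) ⟨i, hmemCl i⟩
        = pick (lam j) (hcard _ (hwin' j)) ⟨j, hmemCl j⟩ := π.injective hij
    rcases lt_trichotomy (lam i) (lam j) with hlt | heq | hgt
    · exfalso
      have := hcross (lam i) (lam j) (hwin' i) (hwin' j) hlt
        (pick (lam i) (hcard _ (hwin' i)) ⟨i, hmemCl i⟩)
        (hpick_mem (lam i) (hcard _ (hwin' i)) ⟨i, hmemCl i⟩)
        (pick (lam j) (hcard _ (hwin' j)) ⟨j, hmemCl j⟩)
        (hpick_mem (lam j) (hcard _ (hwin' j)) ⟨j, hmemCl j⟩)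
      rw [hkk] at this
      exact lt_irrefl _ this
    · exact hpick_inj (lam i) (lam j) heq _ _ _ _ hkk
    · exfalso
      have := hcross (lam j) (lam i) (hwin' j) (hwin' i) hgt
        (pick (lam j) (hcard _ (hwin' j)) ⟨j, hmemCl j⟩)
        (hpick_mem (lam j) (hcard _ (hwin' j)) ⟨j, hmemCl j⟩)
        (pick (lam i) (hcard _ (hwin' i)) ⟨i, hmemCl i⟩)
        (hpick_mem (lam i) (hcard _ (hwin' i)) ⟨i, hmemCl i⟩)
      rw [hkk] at this
      exact lt_irrefl _ this
  · -- monotonicity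
    intro i j hlt
    have hki := hpick_mem (lam i) (hcard _ (hwin' i)) ⟨i, hmemCl i⟩
    have hkj := hpick_mem (lam j) (hcard _ (hwin' j)) ⟨j, hmemCl j⟩
    have hkk := hcross (lam i) (lam j) (hwin' i) (hwin' j) hlt
      (pick (lam i) (hcard _ (hwin' i)) ⟨i, hmemCl i⟩) hki
      (pick (lam j) (hcard _ (hwin' j)) ⟨j, hmemCl j⟩) hkj
    rw [hsFE, hsFE]
    exact sEig_mono hFE (le_of_lt hkk)
  · -- the distance bound
    intro i
    have hki : pick (lam i) (hcard _ (hwin' i)) ⟨i, hmemCl i⟩ ∈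
        Finset.univ.filter fun k => sEig (hFt (lam i)) k = lam i :=
      hpick_mem (lam i) (hcard _ (hwin' i)) ⟨i, hmemCl i⟩
    have hkv : sEig (hFt (lam i)) (pick (lam i) (hcard _ (hwin' i)) ⟨i, hmemCl i⟩) = lam i :=
      (Finset.mem_filter.mp hki).2
    set k := pick (lam i) (hcard _ (hwin' i)) ⟨i, hmemCl i⟩
    have h1 : |hK.eigenvalues i.1 - hFE.eigenvalues (π k)|
        = |sEig (hFt (lam i)) k - sEig (hFt E) k| := by
      rw [hsFE, hFtE, hkv]
    rw [h1]
    calc |sEig (hFt (lam i)) k - sEig (hFt E) k| ≤ ‖Ft (lam i) - Ft E‖ :=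
        weyl_abs (hFt (lam i)) (hFt E) k
      _ ≤ 2 * (γ / ε) ^ 2 * |lam i - E| := hdistE (lam i) (hwin' i)
end

section
/- There exists a constant c_d > 0 depending only on the dimension d with the following property. Let E ∈ ℝ, ε > 0, γ > 0 with 2·c_d·γ ≤ ε, let u ∈ [−1,1]^Λ, and let Λ' ⊆ Λ be a set of positions such that every x ∈ Λ' satisfies both |√(u_x²+1) − E| ≥ ε and |√(u_x²+1) + E| ≥ ε. Let D be the restriction of H(u) to the sites Λ' × {1,2}. Then for every λ ∈ ℝ with |λ − E| ≤ ε/2, the matrix D − λ·I is invertible and for all positions x, y ∈ Λ' the 2×2 block of (D − λ·I)⁻¹ between x and y has operator norm at most (c_d·γ/ε)^{|x−y|}·(4/ε). -/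
open Matrix

/-- The ℓ¹ distance `|x-y| = Σᵢ |xᵢ-yᵢ|` on `ℤ^d`, as a natural number. -/
def dist1 {d : ℕ} (x y : Fin d → ℤ) : ℕ := ∑ i, (x i - y i).natAbs

/-- The random block Hamiltonian: diagonal 2×2 block `[[u_x,1],[1,-u_x]]` at each
position `x ∈ Λ`, and block `γ·I₂` between nearest-neighbor positions. -/
noncomputable def Ham (d : ℕ) (γ : ℝ) (Λ : Finset (Fin d → ℤ)) (u : {x // x ∈ Λ} → ℝ) :
    Matrix ({x // x ∈ Λ} × Fin 2) ({x // x ∈ Λ} × Fin 2) ℝ := fun s t =>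
  if s.1 = t.1 then
    (if s.2 = t.2 then (if s.2 = 0 then u s.1 else -u s.1) else 1)
  else if dist1 (s.1 : Fin d → ℤ) (t.1 : Fin d → ℤ) = 1 then
    (if s.2 = t.2 then γ else 0)
  else 0

/-- The 2×2 block of a site-indexed matrix between positions `x` and `y`. -/
def blk {α β : Type*} (M : Matrix (α × Fin 2) (β × Fin 2) ℝ) (x : α) (y : β) :
    Matrix (Fin 2) (Fin 2) ℝ := fun i j => M (x, i) (y, j)

lemma dist1_triangle {d : ℕ} (x y z : Fin d → ℤ) : dist1 x z ≤ dist1 x y + dist1 y z := by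
  unfold dist1
  rw [← Finset.sum_add_distrib]
  apply Finset.sum_le_sum
  intro i _
  have : x i - z i = (x i - y i) + (y i - z i) := by ring
  rw [this]
  exact Int.natAbs_add_le _ _

lemma dist1_eq_zero_iff {d : ℕ} (x y : Fin d → ℤ) : dist1 x y = 0 ↔ x = y := by
  unfold dist1
  rw [Finset.sum_eq_zero_iff]
  constructor
  · intro h; funext i
    have := h i (Finset.mem_univ i)
    have := Int.natAbs_eq_zero.mp this
    linarith [sub_eq_zero.mp this]
  · rintro rfl i _; simp

lemma sum_eq_one_exists {d : ℕ} (f : Fin d → ℕ) (h : ∑ i, f i = 1) :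
    ∃ i, f i = 1 ∧ ∀ j, j ≠ i → f j = 0 := by
  have h1 : ∃ i, f i ≠ 0 := by
    by_contra hc
    push_neg at hc
    simp [Finset.sum_eq_zero (fun i _ => hc i)] at h
  obtain ⟨i, hi⟩ := h1
  have hle : f i ≤ 1 := by
    calc f i ≤ ∑ j, f j := Finset.single_le_sum (fun j _ => Nat.zero_le _) (Finset.mem_univ i)
    _ = 1 := h
  have hfi : f i = 1 := le_antisymm hle (Nat.one_le_iff_ne_zero.mpr hi)
  refine ⟨i, hfi, fun j hj => ?_⟩
  have := Finset.add_sum_erase Finset.univ f (Finset.mem_univ i)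
  rw [h, hfi] at this
  have hz : ∑ k ∈ Finset.univ.erase i, f k = 0 := by omega
  have := (Finset.sum_eq_zero_iff).mp hz
  exact this j (Finset.mem_erase.mpr ⟨hj, Finset.mem_univ j⟩)

/-- the set of nearest neighbors of `x` -/
def nbrs (d : ℕ) (x : Fin d → ℤ) : Finset (Fin d → ℤ) :=
  (Finset.univ : Finset (Fin d × Bool)).image
    (fun p => Function.update x p.1 (x p.1 + if p.2 then 1 else -1))

lemma card_nbrs (d : ℕ) (x : Fin d → ℤ) : (nbrs d x).card ≤ 2 * d := by
  calc (nbrs d x).card ≤ (Finset.univ : Finset (Fin d × Bool)).card := Finset.card_image_le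
  _ = 2 * d := by simp [Fintype.card_prod]; ring

lemma mem_nbrs {d : ℕ} (x y : Fin d → ℤ) (h : dist1 y x = 1) : y ∈ nbrs d x := by
  obtain ⟨i, hi, hother⟩ := sum_eq_one_exists _ h
  have hyi : y i - x i = 1 ∨ y i - x i = -1 := by
    rcases Int.natAbs_eq (y i - x i) with h' | h' <;> rw [hi] at h' <;> omega
  have hy : y = Function.update x i (y i) := by
    funext j
    by_cases hj : j = i
    · subst hj; simp
    · rw [Function.update_of_ne hj]
      have := hother j hj
      have := Int.natAbs_eq_zero.mp this
      linarith [sub_eq_zero.mp this]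
  apply Finset.mem_image.mpr
  rcases hyi with h' | h'
  · refine ⟨(i, true), Finset.mem_univ _, ?_⟩
    rw [hy]
    have : y i = x i + 1 := by omega
    rw [this]
    simp
  · refine ⟨(i, false), Finset.mem_univ _, ?_⟩
    rw [hy]
    have : y i = x i + -1 := by omega
    rw [this]
    simp


lemma opNorm_sub_le {n : Type*} [Fintype n] [DecidableEq n] (M N : Matrix n n ℝ) :
    opNorm (M - N) ≤ opNorm M + opNorm N := by
  unfold opNorm
  rw [map_sub, map_sub]
  exact norm_sub_le _ _

lemma opNorm_le_sq (m : Matrix (Fin 2) (Fin 2) ℝ) (C : ℝ) (hC : 0 ≤ C)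
    (h : ∀ v : Fin 2 → ℝ,
      (m 0 0 * v 0 + m 0 1 * v 1)^2 + (m 1 0 * v 0 + m 1 1 * v 1)^2
        ≤ C^2 * ((v 0)^2 + (v 1)^2)) :
    opNorm m ≤ C := by
  apply ContinuousLinearMap.opNorm_le_bound _ hC
  intro v
  rw [LinearMap.coe_toContinuousLinearMap']
  rw [EuclideanSpace.norm_eq, EuclideanSpace.norm_eq]
  have happ : ∀ i, (Matrix.toEuclideanLin m v) i = m.mulVec (fun j => v j) i := fun i => rfl
  simp only [happ, Real.norm_eq_abs, sq_abs]
  rw [Fin.sum_univ_two, Fin.sum_univ_two]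
  have : C * Real.sqrt ((v 0)^2 + (v 1)^2) = Real.sqrt (C^2 * ((v 0)^2 + (v 1)^2)) := by
    rw [Real.sqrt_mul (by positivity), Real.sqrt_sq hC]
  rw [this]
  apply Real.sqrt_le_sqrt
  have := h (fun j => v j)
  simpa [Matrix.mulVec, dotProduct, Fin.sum_univ_two] using this

lemma opNorm_le_two_mul {m : Matrix (Fin 2) (Fin 2) ℝ} {b : ℝ} (hb : 0 ≤ b)
    (h : ∀ i j, |m i j| ≤ b) : opNorm m ≤ 2 * b := by
  apply opNorm_le_sq _ _ (by linarith)
  intro v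
  have h00 := abs_le.mp (h 0 0); have h01 := abs_le.mp (h 0 1)
  have h10 := abs_le.mp (h 1 0); have h11 := abs_le.mp (h 1 1)
  nlinarith [sq_nonneg (v 0), sq_nonneg (v 1), sq_nonneg (v 0 + v 1), sq_nonneg (v 0 - v 1),
    sq_nonneg (m 0 0 * v 0 + m 0 1 * v 1), sq_nonneg (m 1 0 * v 0 + m 1 1 * v 1),
    sq_nonneg (m 0 0 * v 1 - m 0 1 * v 0), sq_nonneg (m 1 0 * v 1 - m 1 1 * v 0),
    mul_le_mul (h 0 0) (h 0 0) (abs_nonneg _) hb, mul_le_mul (h 0 1) (h 0 1) (abs_nonneg _) hb,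
    mul_le_mul (h 1 0) (h 1 0) (abs_nonneg _) hb, mul_le_mul (h 1 1) (h 1 1) (abs_nonneg _) hb,
    sq_abs (m 0 0), sq_abs (m 0 1), sq_abs (m 1 0), sq_abs (m 1 1)]

lemma opNorm_le_frob {m : Matrix (Fin 2) (Fin 2) ℝ} {C : ℝ} (hC : 0 ≤ C)
    (h : (m 0 0)^2 + (m 0 1)^2 + (m 1 0)^2 + (m 1 1)^2 ≤ C^2) : opNorm m ≤ C := by
  apply opNorm_le_sq _ _ hC
  intro v
  nlinarith [sq_nonneg (m 0 0 * v 1 - m 0 1 * v 0), sq_nonneg (m 1 0 * v 1 - m 1 1 * v 0),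
    sq_nonneg (v 0), sq_nonneg (v 1), sq_nonneg (m 1 0), sq_nonneg (m 1 1),
    sq_nonneg (m 0 0), sq_nonneg (m 0 1)]

lemma abs_le_sqrt_sq_add_one (p : ℝ) : |p| ≤ Real.sqrt (p^2+1) := by
  have hs2 : Real.sqrt (p^2+1) ^ 2 = p^2 + 1 := Real.sq_sqrt (by positivity)
  nlinarith [Real.sqrt_nonneg (p^2+1), abs_nonneg p, sq_abs p]

lemma det_lower (p E ε lam : ℝ) (hε : 0 < ε)
    (h1 : ε ≤ |Real.sqrt (p^2+1) - E|) (h2 : ε ≤ |Real.sqrt (p^2+1) + E|)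
    (hlam : |lam - E| ≤ ε/2) :
    (ε/2) * (Real.sqrt (p^2+1) + |lam|) ≤ |lam^2 - p^2 - 1| := by
  set s := Real.sqrt (p^2+1) with hs
  have hs0 : 0 ≤ s := Real.sqrt_nonneg _
  have hs2 : s ^ 2 = p^2 + 1 := Real.sq_sqrt (by positivity)
  have hs1 : 1 ≤ s := by nlinarith [sq_nonneg p]
  have hms : ε/2 ≤ |lam - s| := by
    have t1 : |s - E| ≤ |s - lam| + |lam - E| := abs_sub_le s lam E
    rw [abs_sub_comm s lam] at t1
    linarith
  have hps : ε/2 ≤ |lam + s| := by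
    have e1 : s + E = (lam + s) + (E - lam) := by ring
    have t1 : |s + E| ≤ |lam + s| + |E - lam| := by rw [e1]; exact abs_add_le _ _
    rw [abs_sub_comm E lam] at t1
    linarith
  have hfac : lam^2 - p^2 - 1 = (lam - s) * (lam + s) := by linear_combination hs2
  rw [hfac, abs_mul]
  rcases le_or_gt 0 lam with hl | hl
  · have e2 : |lam + s| = |lam| + s := by
      rw [abs_of_nonneg (by linarith), abs_of_nonneg hl]
    rw [e2]
    have : 0 ≤ |lam| + s := by positivity
    nlinarith
  · have e2 : |lam - s| = s + |lam| := by
      rw [abs_of_nonpos (by linarith), abs_of_neg hl]; ring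
    rw [e2]
    nlinarith [abs_nonneg (lam + s)]

lemma inv_entry_le (p E ε lam w : ℝ) (hε : 0 < ε)
    (h1 : ε ≤ |Real.sqrt (p^2+1) - E|) (h2 : ε ≤ |Real.sqrt (p^2+1) + E|)
    (hlam : |lam - E| ≤ ε/2) (hw : |w| ≤ Real.sqrt (p^2+1) + |lam|) :
    |(lam^2 - p^2 - 1)⁻¹ * w| ≤ 2/ε := by
  have hkey := det_lower p E ε lam hε h1 h2 hlam
  set s := Real.sqrt (p^2+1)
  have hs1 : 1 ≤ s := by
    have hs2 : s ^ 2 = p^2 + 1 := Real.sq_sqrt (by positivity)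
    nlinarith [Real.sqrt_nonneg (p^2+1), sq_nonneg p]
  have hdtpos : 0 < |lam^2 - p^2 - 1| := by
    have : 0 < (ε/2) * (s + |lam|) := by positivity
    linarith
  rw [abs_mul, abs_inv, inv_mul_le_iff₀ hdtpos]
  calc |w| ≤ s + |lam| := hw
  _ = ((ε/2) * (s + |lam|)) * (2/ε) := by field_simp; try ring
  _ ≤ |lam^2 - p^2 - 1| * (2/ε) := mul_le_mul_of_nonneg_right hkey (by positivity)

lemma frob_le (p E ε lam : ℝ) (hε : 0 < ε)
    (h1 : ε ≤ |Real.sqrt (p^2+1) - E|) (h2 : ε ≤ |Real.sqrt (p^2+1) + E|)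
    (hlam : |lam - E| ≤ ε/2) :
    ((lam^2-p^2-1)⁻¹ * (-(p+lam)))^2 + ((lam^2-p^2-1)⁻¹ * (-1))^2
      + ((lam^2-p^2-1)⁻¹ * (-1))^2 + ((lam^2-p^2-1)⁻¹ * (p - lam))^2 ≤ (3/ε)^2 := by
  have hkey := det_lower p E ε lam hε h1 h2 hlam
  set s := Real.sqrt (p^2+1) with hsdef
  set dt := lam^2 - p^2 - 1 with hdt
  have hs0 : 0 ≤ s := Real.sqrt_nonneg _
  have hs2 : s ^ 2 = p^2 + 1 := Real.sq_sqrt (by positivity)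
  have hs1 : 1 ≤ s := by nlinarith [sq_nonneg p]
  have hdtpos : 0 < |dt| := by
    have : 0 < (ε/2) * (s + |lam|) := by positivity
    linarith
  have hdtne : dt ≠ 0 := by
    intro h; rw [h] at hdtpos; simp at hdtpos
  have hq : dt⁻¹ * dt = 1 := inv_mul_cancel₀ hdtne
  have hq2 : dt⁻¹^2 * dt^2 = 1 := by nlinarith
  have h4 : (ε/2 * (s + |lam|))^2 ≤ dt^2 := by
    rw [← sq_abs dt]
    apply pow_le_pow_left₀ (by positivity) hkey
  have hdt2 : ε^2/4*(s^2+lam^2) ≤ dt^2 := by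
    nlinarith [abs_nonneg lam, sq_abs lam, sq_nonneg (s - |lam|), sq_nonneg ε, mul_nonneg (mul_nonneg (le_of_lt hε) (le_of_lt hε)) (mul_nonneg hs0 (abs_nonneg lam))]
  have hmono : dt⁻¹^2 * (ε^2/4*(s^2+lam^2)) ≤ dt⁻¹^2 * dt^2 :=
    mul_le_mul_of_nonneg_left hdt2 (sq_nonneg _)
  rw [div_pow, le_div_iff₀ (by positivity : (0:ℝ) < ε^2)]
  nlinarith [hq2, hmono, sq_nonneg dt⁻¹, sq_nonneg lam, sq_nonneg (dt⁻¹*ε)]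


lemma dist1_comm {d : ℕ} (x y : Fin d → ℤ) : dist1 x y = dist1 y x := by
  unfold dist1
  apply Finset.sum_congr rfl
  intro i _
  omega

lemma one_le_sqrt_sq_add_one (p : ℝ) : 1 ≤ Real.sqrt (p^2+1) := by
  have hs2 : Real.sqrt (p^2+1) ^ 2 = p^2 + 1 := Real.sq_sqrt (by positivity)
  nlinarith [Real.sqrt_nonneg (p^2+1), sq_nonneg p]


set_option maxHeartbeats 1000000 in
/-- there is `c_d > 0` such that if `2·c_d·γ ≤ ε` and all positions of
`Λ' ⊆ Λ` are `ε`-nonresonant with `E`, then for `|λ-E| ≤ ε/2` the restriction `D` of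
`H(u)` to `Λ'` has `D - λ·I` invertible, with 2×2 blocks of the inverse bounded by
`(c_d·γ/ε)^{|x-y|}·(4/ε)`. -/
theorem inverse_block_decay (d : ℕ) (hd : 1 ≤ d) :
    ∃ c : ℝ, 0 < c ∧
      ∀ (γ E ε : ℝ), 0 < γ → 0 < ε → 2 * c * γ ≤ ε →
      ∀ (Λ : Finset (Fin d → ℤ)), (∃ a b, Λ = Finset.Icc a b) →
      ∀ (u : {x // x ∈ Λ} → ℝ), (∀ x, u x ∈ Set.Icc (-1 : ℝ) 1) →
      ∀ (Λ' : Finset (Fin d → ℤ)) (hsub : Λ' ⊆ Λ),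
      (∀ x : {x // x ∈ Λ'},
          ε ≤ |Real.sqrt (u ⟨x.1, hsub x.2⟩ ^ 2 + 1) - E| ∧
          ε ≤ |Real.sqrt (u ⟨x.1, hsub x.2⟩ ^ 2 + 1) + E|) →
      ∀ lam : ℝ, |lam - E| ≤ ε / 2 →
      IsUnit ((Ham d γ Λ u).submatrix
          (fun s : {x // x ∈ Λ'} × Fin 2 => ((⟨s.1.1, hsub s.1.2⟩ : {x // x ∈ Λ}), s.2))
          (fun s : {x // x ∈ Λ'} × Fin 2 => ((⟨s.1.1, hsub s.1.2⟩ : {x // x ∈ Λ}), s.2))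
          - lam • 1) ∧
      ∀ x y : {x // x ∈ Λ'},
        opNorm (blk (((Ham d γ Λ u).submatrix
            (fun s : {x // x ∈ Λ'} × Fin 2 => ((⟨s.1.1, hsub s.1.2⟩ : {x // x ∈ Λ}), s.2))
            (fun s : {x // x ∈ Λ'} × Fin 2 => ((⟨s.1.1, hsub s.1.2⟩ : {x // x ∈ Λ}), s.2))
            - lam • 1)⁻¹) x y) ≤
          (c * γ / ε) ^ dist1 (x : Fin d → ℤ) (y : Fin d → ℤ) * (4 / ε) := by
  refine ⟨24 * d, by positivity, ?_⟩
  intro γ E ε hγ hε hcε Λ _hrect u _hu Λ' hsub hres lam hlam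
  set M : Matrix ({x // x ∈ Λ'} × Fin 2) ({x // x ∈ Λ'} × Fin 2) ℝ :=
    ((Ham d γ Λ u).submatrix
      (fun s : {x // x ∈ Λ'} × Fin 2 => ((⟨s.1.1, hsub s.1.2⟩ : {x // x ∈ Λ}), s.2))
      (fun s : {x // x ∈ Λ'} × Fin 2 => ((⟨s.1.1, hsub s.1.2⟩ : {x // x ∈ Λ}), s.2))
      - lam • 1) with hMdef
  by_cases hNE : Nonempty {x // x ∈ Λ'}
  case neg =>
    have hie : IsEmpty ({x // x ∈ Λ'} × Fin 2) := by
      rw [not_nonempty_iff] at hNE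
      infer_instance
    constructor
    · exact (Matrix.isUnit_iff_isUnit_det M).mpr (by simp [Matrix.det_isEmpty])
    · intro x y
      exact absurd (Nonempty.intro x) hNE
  case pos =>
  have hNES : Nonempty ({x // x ∈ Λ'} × Fin 2) := ⟨⟨hNE.some, 0⟩⟩
  set p : {x // x ∈ Λ'} → ℝ := fun x => u ⟨x.1, hsub x.2⟩ with hpdef
  set dt : {x // x ∈ Λ'} → ℝ := fun x => lam^2 - (p x)^2 - 1 with hdtdef
  set mval : {x // x ∈ Λ'} → Matrix (Fin 2) (Fin 2) ℝ :=
    fun x => (dt x)⁻¹ • !![-(p x + lam), -1; -1, p x - lam] with hmvaldef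
  set aval : {x // x ∈ Λ'} → Matrix (Fin 2) (Fin 2) ℝ :=
    fun x => !![p x - lam, 1; 1, -(p x) - lam] with havaldef
  set A : Matrix ({x // x ∈ Λ'} × Fin 2) ({x // x ∈ Λ'} × Fin 2) ℝ :=
    fun s t => if s.1 = t.1 then aval s.1 s.2 t.2 else 0 with hAdef
  set G : Matrix ({x // x ∈ Λ'} × Fin 2) ({x // x ∈ Λ'} × Fin 2) ℝ :=
    fun s t => if s.1 ≠ t.1 ∧ dist1 s.1.1 t.1.1 = 1 ∧ s.2 = t.2 then γ else 0 with hGdef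
  set N : Matrix ({x // x ∈ Λ'} × Fin 2) ({x // x ∈ Λ'} × Fin 2) ℝ :=
    fun s t => if s.1 = t.1 then mval s.1 s.2 t.2 else 0 with hNdef
  set T : Matrix ({x // x ∈ Λ'} × Fin 2) ({x // x ∈ Λ'} × Fin 2) ℝ := N * G with hTdef
  have hres1 : ∀ x : {x // x ∈ Λ'}, ε ≤ |Real.sqrt ((p x)^2 + 1) - E| := fun x => (hres x).1
  have hres2 : ∀ x : {x // x ∈ Λ'}, ε ≤ |Real.sqrt ((p x)^2 + 1) + E| := fun x => (hres x).2
  have hdtne : ∀ x, dt x ≠ 0 := by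
    intro x
    have hkey := det_lower (p x) E ε lam hε (hres1 x) (hres2 x) hlam
    have h1 : 1 ≤ Real.sqrt ((p x)^2+1) := one_le_sqrt_sq_add_one _
    have : 0 < |dt x| := by
      have : 0 < (ε/2) * (Real.sqrt ((p x)^2+1) + |lam|) := by positivity
      rw [hdtdef]
      simp only
      linarith
    exact abs_pos.mp this
  have hMdecomp : M = A + G := by
    funext s t
    obtain ⟨x, i⟩ := s
    obtain ⟨y, j⟩ := t
    rw [Matrix.add_apply]
    by_cases h1 : x = y
    · subst h1
      by_cases h2 : i = j
      · subst h2
        fin_cases i <;>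
          simp [hMdef, hAdef, hGdef, havaldef, Ham, Matrix.one_apply, hpdef] <;> ring
      · simp only [hMdef, hAdef, hGdef, havaldef, Ham, Matrix.one_apply, Matrix.sub_apply,
          Matrix.submatrix_apply, Matrix.add_apply, Matrix.smul_apply, smul_eq_mul]
        simp [h2, Prod.ext_iff]
        fin_cases i <;> fin_cases j <;> simp_all
    · have hcoe' : (⟨x.1, hsub x.2⟩ : {z // z ∈ Λ}) ≠ ⟨y.1, hsub y.2⟩ :=
        fun h => h1 (Subtype.ext (Subtype.mk_eq_mk.mp h))
      simp only [hMdef, hAdef, hGdef, Ham, Matrix.one_apply, Matrix.sub_apply,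
        Matrix.submatrix_apply, Matrix.add_apply, Matrix.smul_apply, smul_eq_mul]
      simp [h1, hcoe', Prod.ext_iff]
      by_cases h3 : dist1 x.1 y.1 = 1 <;> by_cases h4 : i = j <;> simp_all
  have h2inv : ∀ x, mval x * aval x = 1 := by
    intro x
    have hne := hdtne x
    have hne' : lam ^ 2 - p x ^ 2 - 1 ≠ 0 := hne
    rw [hmvaldef, havaldef]
    simp only
    ext i j
    fin_cases i <;> fin_cases j <;>
      simp [Matrix.mul_apply, Fin.sum_univ_two, Matrix.one_apply, hdtdef] <;>
      field_simp <;> ring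
  have hNA : N * A = 1 := by
    ext ⟨x, i⟩ ⟨y, j⟩
    rw [Matrix.mul_apply, Fintype.sum_prod_type]
    rw [Finset.sum_eq_single x]
    · by_cases hxy : x = y
      · subst hxy
        have := congrFun (congrFun (h2inv x) i) j
        rw [Matrix.mul_apply] at this
        calc ∑ j' : Fin 2, N (x, i) (x, j') * A (x, j') (x, j)
            = ∑ j' : Fin 2, mval x i j' * aval x j' j := by
              apply Finset.sum_congr rfl
              intro j' _
              rw [hNdef, hAdef]
              simp
        _ = (1 : Matrix (Fin 2) (Fin 2) ℝ) i j := this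
        _ = (1 : Matrix ({x // x ∈ Λ'} × Fin 2) ({x // x ∈ Λ'} × Fin 2) ℝ) (x, i) (x, j) := by
              simp [Matrix.one_apply, Prod.ext_iff]
      · have : ∀ j' : Fin 2, N (x, i) (x, j') * A (x, j') (y, j) = 0 := by
          intro j'
          rw [hAdef]
          simp [hxy]
        simp only [this, Finset.sum_const_zero]
        rw [Matrix.one_apply]
        simp [Prod.ext_iff, hxy]
    · intro z _ hz
      have : ∀ j' : Fin 2, N (x, i) (z, j') * A (z, j') (y, j) = 0 := by
        intro j'
        rw [hNdef]
        simp [(Ne.symm hz : x ≠ z)]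
      simp only [this, Finset.sum_const_zero]
    · intro h
      exact absurd (Finset.mem_univ x) h
  have hNM : N * M = 1 + T := by
    rw [hMdecomp, Matrix.mul_add, hNA, hTdef]
  have hmval_le : ∀ (x : {x // x ∈ Λ'}) (i j : Fin 2), |mval x i j| ≤ 2/ε := by
    intro x i j
    have habs : |p x| ≤ Real.sqrt ((p x)^2+1) := abs_le_sqrt_sq_add_one _
    have h1s : 1 ≤ Real.sqrt ((p x)^2+1) := one_le_sqrt_sq_add_one _
    have hal : 0 ≤ |lam| := abs_nonneg lam
    rw [hmvaldef]
    simp only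
    fin_cases i <;> fin_cases j <;> simp [hdtdef, -abs_mul] <;>
      first
      | exact inv_entry_le (p x) E ε lam (-lam + -p x) hε (hres1 x) (hres2 x) hlam (by
          have h : -lam + -p x = -(lam + p x) := by ring
          rw [h, abs_neg]
          calc |lam + p x| ≤ |lam| + |p x| := abs_add_le _ _
          _ ≤ _ := by linarith)
      | simpa using inv_entry_le (p x) E ε lam 1 hε (hres1 x) (hres2 x) hlam
          (by rw [abs_one]; linarith)
      | exact inv_entry_le (p x) E ε lam (p x - lam) hε (hres1 x) (hres2 x) hlam (by
          rw [sub_eq_add_neg]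
          calc |p x + -lam| ≤ |p x| + |-lam| := abs_add_le _ _
          _ ≤ _ := by rw [abs_neg]; linarith)
  have hTfact : ∀ s t : {x // x ∈ Λ'} × Fin 2,
      T s t = if dist1 s.1.1 t.1.1 = 1 then mval s.1 s.2 t.2 * γ else 0 := by
    intro ⟨x, i⟩ ⟨y, j⟩
    rw [hTdef, Matrix.mul_apply, Fintype.sum_prod_type]
    rw [Finset.sum_eq_single x]
    · by_cases hdist : dist1 x.1 y.1 = 1
      · have hne : x ≠ y := by
          intro h
          rw [h] at hdist
          rw [(dist1_eq_zero_iff y.1 y.1).mpr rfl] at hdist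
          exact one_ne_zero hdist.symm
        rw [if_pos hdist]
        rw [Fin.sum_univ_two]
        rw [hNdef, hGdef]
        simp only [if_pos rfl]
        fin_cases j <;> simp [hne, hdist]
      · rw [if_neg hdist]
        apply Finset.sum_eq_zero
        intro j' _
        rw [hGdef]
        simp [hdist]
    · intro z _ hz
      apply Finset.sum_eq_zero
      intro j' _
      rw [hNdef]
      simp [(Ne.symm hz : x ≠ z)]
    · intro h
      exact absurd (Finset.mem_univ x) h
  have hT0 : ∀ s t, dist1 s.1.1 t.1.1 ≠ 1 → T s t = 0 := by
    intro s t h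
    rw [hTfact s t, if_neg h]
  have hTle : ∀ s t : {x // x ∈ Λ'} × Fin 2,
      |T s t| ≤ if dist1 s.1.1 t.1.1 = 1 then 2/ε*γ else 0 := by
    intro s t
    rw [hTfact s t]
    by_cases h : dist1 s.1.1 t.1.1 = 1
    · rw [if_pos h, if_pos h, abs_mul, abs_of_pos hγ]
      exact mul_le_mul_of_nonneg_right (hmval_le _ _ _) (le_of_lt hγ)
    · rw [if_neg h, if_neg h, abs_zero]
  set ρ : ℝ := 8*d*γ/ε with hρdef
  have hρ0 : 0 ≤ ρ := by positivity
  have hρ6 : ρ ≤ 1/6 := by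
    rw [hρdef, div_le_iff₀ hε]
    have hd1 : (1:ℝ) ≤ (d:ℝ) := by exact_mod_cast hd
    nlinarith
  have hcard : ∀ x : {x // x ∈ Λ'},
      ((Finset.univ : Finset {x // x ∈ Λ'}).filter (fun y => dist1 x.1 y.1 = 1)).card ≤ 2*d := by
    intro x
    have hsub2 : ∀ y ∈ (Finset.univ : Finset {x // x ∈ Λ'}).filter (fun y => dist1 x.1 y.1 = 1),
        y.1 ∈ nbrs d x.1 := by
      intro y hy
      rw [Finset.mem_filter] at hy
      exact mem_nbrs x.1 y.1 (by rw [dist1_comm]; exact hy.2)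
    calc ((Finset.univ : Finset {x // x ∈ Λ'}).filter (fun y => dist1 x.1 y.1 = 1)).card
        ≤ (nbrs d x.1).card := by
          apply Finset.card_le_card_of_injOn (fun y => y.1) (fun y hy => hsub2 y hy)
          intro a _ b _ hab
          exact Subtype.ext hab
    _ ≤ 2*d := card_nbrs d x.1
  have hrow : ∀ s : {x // x ∈ Λ'} × Fin 2, ∑ t : {x // x ∈ Λ'} × Fin 2, |T s t| ≤ ρ := by
    intro s
    calc ∑ t : {x // x ∈ Λ'} × Fin 2, |T s t|
        ≤ ∑ t : {x // x ∈ Λ'} × Fin 2, (if dist1 s.1.1 t.1.1 = 1 then 2/ε*γ else 0) :=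
          Finset.sum_le_sum (fun t _ => hTle s t)
    _ = ∑ y : {x // x ∈ Λ'}, ∑ j : Fin 2, (if dist1 s.1.1 y.1 = 1 then 2/ε*γ else 0) := by
          rw [Fintype.sum_prod_type]
    _ = 2 * ∑ y : {x // x ∈ Λ'}, (if dist1 s.1.1 y.1 = 1 then 2/ε*γ else 0) := by
          rw [Finset.mul_sum]
          apply Finset.sum_congr rfl
          intro y _
          rw [Finset.sum_const]
          simp [two_mul]
    _ = 2 * (((Finset.univ : Finset {x // x ∈ Λ'}).filter
            (fun y => dist1 s.1.1 y.1 = 1)).card * (2/ε*γ)) := by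
          rw [Finset.sum_ite, Finset.sum_const, Finset.sum_const_zero, add_zero, nsmul_eq_mul]
    _ ≤ 2 * ((2*d) * (2/ε*γ)) := by
          apply mul_le_mul_of_nonneg_left _ (by norm_num)
          apply mul_le_mul_of_nonneg_right _ (by positivity)
          exact_mod_cast hcard s.1
    _ = ρ := by rw [hρdef]; push_cast; ring
  have hunit : IsUnit M := by
    rw [Matrix.isUnit_iff_isUnit_det, isUnit_iff_ne_zero]
    intro hdet0
    obtain ⟨v, hvne, hv⟩ := Matrix.exists_mulVec_eq_zero_iff.mpr hdet0
    have h1 : (1 + T).mulVec v = 0 := by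
      rw [← hNM, ← Matrix.mulVec_mulVec, hv, Matrix.mulVec_zero]
    have h2 : ∀ s, v s = - ∑ t, T s t * v t := by
      intro s
      have := congrFun h1 s
      rw [Matrix.add_mulVec, Matrix.one_mulVec] at this
      have h3 : T.mulVec v s = ∑ t, T s t * v t := by
        rw [Matrix.mulVec, dotProduct]
      rw [Pi.add_apply, Pi.zero_apply, h3] at this
      linarith
    obtain ⟨s₀, _, hs₀⟩ := Finset.exists_mem_eq_sup' (Finset.univ_nonempty)
      (fun s : {x // x ∈ Λ'} × Fin 2 => |v s|)
    have hm_le : ∀ s, |v s| ≤ |v s₀| := by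
      intro s
      rw [← hs₀]
      exact Finset.le_sup' (fun s : {x // x ∈ Λ'} × Fin 2 => |v s|) (Finset.mem_univ s)
    have hm0 : 0 ≤ |v s₀| := abs_nonneg _
    have hchain : |v s₀| ≤ ρ * |v s₀| := by
      calc |v s₀| = |∑ t, T s₀ t * v t| := by rw [h2 s₀, abs_neg]
      _ ≤ ∑ t, |T s₀ t * v t| := Finset.abs_sum_le_sum_abs _ _
      _ = ∑ t, |T s₀ t| * |v t| := by simp [abs_mul]
      _ ≤ ∑ t, |T s₀ t| * |v s₀| :=
          Finset.sum_le_sum (fun t _ => mul_le_mul_of_nonneg_left (hm_le t) (abs_nonneg _))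
      _ = (∑ t, |T s₀ t|) * |v s₀| := by rw [Finset.sum_mul]
      _ ≤ ρ * |v s₀| := mul_le_mul_of_nonneg_right (hrow s₀) hm0
    have hmzero : |v s₀| ≤ 0 := by nlinarith
    apply hvne
    funext s
    have := hm_le s
    have : |v s| ≤ 0 := le_trans this hmzero
    simpa using le_antisymm this (abs_nonneg _)
  have hdetU : IsUnit M.det := (Matrix.isUnit_iff_isUnit_det M).mp hunit
  set K : Matrix ({x // x ∈ Λ'} × Fin 2) ({x // x ∈ Λ'} × Fin 2) ℝ := M⁻¹ with hKdef
  have hMK : M * K = 1 := Matrix.mul_nonsing_inv M hdetU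
  have hKid : K = N - T * K := by
    have h1 : (1 + T) * K = N := by
      rw [← hNM, Matrix.mul_assoc, hMK, Matrix.mul_one]
    rw [Matrix.add_mul, Matrix.one_mul] at h1
    exact (eq_sub_of_add_eq h1)
  have hKent : ∀ s t, K s t = N s t - (T*K) s t := by
    intro s t
    have := congrFun (congrFun hKid s) t
    simpa [Matrix.sub_apply] using this
  have hN_le : ∀ s t, |N s t| ≤ 2/ε := by
    intro s t
    rw [hNdef]
    by_cases h : s.1 = t.1
    · simpa [h] using hmval_le s.1 s.2 t.2
    · simp [h]
      positivity
  have hTQ : ∀ (Q : Matrix ({x // x ∈ Λ'} × Fin 2) ({x // x ∈ Λ'} × Fin 2) ℝ) (C : ℝ),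
      0 ≤ C → (∀ r t, |Q r t| ≤ C) → ∀ s t, |(T * Q) s t| ≤ ρ * C := by
    intro Q C hC hQ s t
    calc |(T * Q) s t| = |∑ r, T s r * Q r t| := by rw [Matrix.mul_apply]
    _ ≤ ∑ r, |T s r * Q r t| := Finset.abs_sum_le_sum_abs _ _
    _ = ∑ r, |T s r| * |Q r t| := by simp [abs_mul]
    _ ≤ ∑ r, |T s r| * C :=
        Finset.sum_le_sum (fun r _ => mul_le_mul_of_nonneg_left (hQ r t) (abs_nonneg _))
    _ = (∑ r, |T s r|) * C := by rw [Finset.sum_mul]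
    _ ≤ ρ * C := mul_le_mul_of_nonneg_right (hrow s) hC
  have hE0 : ∀ s t, |K s t| ≤ 12/(5*ε) := by
    obtain ⟨⟨s₁, t₁⟩, _, hq⟩ := Finset.exists_mem_eq_sup' (Finset.univ_nonempty)
      (fun q : ({x // x ∈ Λ'} × Fin 2) × ({x // x ∈ Λ'} × Fin 2) => |K q.1 q.2|)
    have hB_le : ∀ s t, |K s t| ≤ |K s₁ t₁| := by
      intro s t
      rw [← hq]
      exact Finset.le_sup'
        (fun q : ({x // x ∈ Λ'} × Fin 2) × ({x // x ∈ Λ'} × Fin 2) => |K q.1 q.2|)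
        (Finset.mem_univ (s, t))
    have hB0 : 0 ≤ |K s₁ t₁| := abs_nonneg _
    have hstep : |K s₁ t₁| ≤ 2/ε + ρ * |K s₁ t₁| := by
      calc |K s₁ t₁| = |N s₁ t₁ - (T*K) s₁ t₁| := by rw [hKent s₁ t₁]
      _ ≤ |N s₁ t₁| + |(T*K) s₁ t₁| := abs_sub _ _
      _ ≤ 2/ε + ρ * |K s₁ t₁| :=
          add_le_add (hN_le s₁ t₁) (hTQ K (|K s₁ t₁|) hB0 (fun r t => hB_le r t) s₁ t₁)
    have hBfin : |K s₁ t₁| ≤ 12/(5*ε) := by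
      have h6 : ρ * |K s₁ t₁| ≤ (1/6) * |K s₁ t₁| := mul_le_mul_of_nonneg_right hρ6 hB0
      have he : 12/(5*ε) = (6/5) * (2/ε) := by ring
      rw [he]
      linarith
    exact fun s t => le_trans (hB_le s t) hBfin
  have hB00 : (0:ℝ) ≤ 12/(5*ε) := by positivity
  have hEk : ∀ (k : ℕ) (s t : {x // x ∈ Λ'} × Fin 2), k ≤ dist1 s.1.1 t.1.1 →
      |K s t| ≤ ρ^k * (12/(5*ε)) := by
    intro k
    induction k with
    | zero => intro s t _; rw [pow_zero, one_mul]; exact hE0 s t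
    | succ k ih =>
      intro s t hk
      have hne : s.1 ≠ t.1 := by
        intro h
        rw [(by rw [h] : dist1 s.1.1 t.1.1 = dist1 t.1.1 t.1.1),
          (dist1_eq_zero_iff t.1.1 t.1.1).mpr rfl] at hk
        omega
      have hNst : N s t = 0 := by rw [hNdef]; simp [hne]
      have hKst : |K s t| ≤ ∑ r, |T s r| * |K r t| := by
        rw [hKent s t, hNst, zero_sub, abs_neg, Matrix.mul_apply]
        calc |∑ r, T s r * K r t| ≤ ∑ r, |T s r * K r t| := Finset.abs_sum_le_sum_abs _ _
        _ = ∑ r, |T s r| * |K r t| := by simp [abs_mul]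
      calc |K s t| ≤ ∑ r, |T s r| * |K r t| := hKst
      _ ≤ ∑ r, |T s r| * (ρ^k * (12/(5*ε))) := by
          apply Finset.sum_le_sum
          intro r _
          by_cases hr : dist1 s.1.1 r.1.1 = 1
          · apply mul_le_mul_of_nonneg_left _ (abs_nonneg _)
            apply ih r t
            have htri := dist1_triangle s.1.1 r.1.1 t.1.1
            omega
          · rw [hT0 s r hr, abs_zero, zero_mul, zero_mul]
      _ = (∑ r, |T s r|) * (ρ^k * (12/(5*ε))) := by rw [Finset.sum_mul]
      _ ≤ ρ * (ρ^k * (12/(5*ε))) :=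
          mul_le_mul_of_nonneg_right (hrow s) (by positivity)
      _ = ρ^(k+1) * (12/(5*ε)) := by ring
  refine ⟨hunit, ?_⟩
  intro x y
  by_cases hxy : dist1 x.1 y.1 = 0
  · have hxy' : x = y := Subtype.ext ((dist1_eq_zero_iff _ _).mp hxy)
    subst hxy'
    rw [hxy, pow_zero, one_mul]
    have hblk : blk K x x = mval x - blk (T*K) x x := by
      funext i j
      simp only [blk, Matrix.sub_apply]
      rw [hKent (x,i) (x,j), hNdef]
      simp
    rw [hblk]
    have h1 : opNorm (mval x) ≤ 3/ε := by
      apply opNorm_le_frob (by positivity)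
      have hfr := frob_le (p x) E ε lam hε (hres1 x) (hres2 x) hlam
      have e00 : mval x 0 0 = (lam ^ 2 - p x ^ 2 - 1)⁻¹ * (-(p x + lam)) := rfl
      have e01 : mval x 0 1 = (lam ^ 2 - p x ^ 2 - 1)⁻¹ * (-1) := rfl
      have e10 : mval x 1 0 = (lam ^ 2 - p x ^ 2 - 1)⁻¹ * (-1) := rfl
      have e11 : mval x 1 1 = (lam ^ 2 - p x ^ 2 - 1)⁻¹ * (p x - lam) := rfl
      rw [e00, e01, e10, e11]
      exact hfr
    have h2 : opNorm (blk (T*K) x x) ≤ 2 * (ρ * (12/(5*ε))) := by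
      apply opNorm_le_two_mul (by positivity)
      intro i j
      exact hTQ K _ hB00 hE0 (x,i) (x,j)
    have h3 : opNorm (mval x - blk (T*K) x x) ≤ 3/ε + 2 * (ρ * (12/(5*ε))) :=
      le_trans (opNorm_sub_le _ _) (add_le_add h1 h2)
    refine le_trans h3 ?_
    have h4 : ρ * (12/(5*ε)) ≤ (1/6) * (12/(5*ε)) := mul_le_mul_of_nonneg_right hρ6 hB00
    have e1 : 2*((1/6)*(12/(5*ε))) = (4/5)*(1/ε) := by ring
    have e2 : (3:ℝ)/ε = 3*(1/ε) := by ring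
    have e3 : (4:ℝ)/ε = 4*(1/ε) := by ring
    have e4 : 0 < 1/ε := by positivity
    linarith
  · have hk1 : 1 ≤ dist1 x.1 y.1 := Nat.one_le_iff_ne_zero.mpr hxy
    have hb : opNorm (blk K x y) ≤ 2 * (ρ^(dist1 x.1 y.1) * (12/(5*ε))) := by
      apply opNorm_le_two_mul (by positivity)
      intro i j
      exact hEk (dist1 x.1 y.1) (x,i) (y,j) (le_refl _)
    refine le_trans hb ?_
    have hceq : 24 * (d:ℝ) * γ / ε = 3 * ρ := by rw [hρdef]; ring
    rw [hceq, mul_pow]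
    have h3k : (3:ℝ) ≤ 3^(dist1 x.1 y.1) := by
      calc (3:ℝ) = 3^1 := (pow_one 3).symm
      _ ≤ _ := pow_le_pow_right₀ (by norm_num) hk1
    have hRk : (0:ℝ) ≤ ρ^(dist1 x.1 y.1) := by positivity
    calc 2*(ρ^(dist1 x.1 y.1)*(12/(5*ε))) = ρ^(dist1 x.1 y.1) * (24/(5*ε)) := by ring
    _ ≤ ρ^(dist1 x.1 y.1) * (3 * (4/ε)) := by
        apply mul_le_mul_of_nonneg_left _ hRk
        have e5 : 3 * (4/ε) = 12/ε := by ring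
        rw [e5, div_le_div_iff₀ (by positivity) hε]
        nlinarith
    _ = 3 * ρ^(dist1 x.1 y.1) * (4/ε) := by ring
    _ ≤ 3^(dist1 x.1 y.1) * ρ^(dist1 x.1 y.1) * (4/ε) := by
        apply mul_le_mul_of_nonneg_right _ (by positivity)
        exact mul_le_mul_of_nonneg_right h3k hRk
end
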